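/- Let $R$ be a commutative ring with an ascending filtration $R_{\le 0} \subseteq R_{\le 1} \subseteq \cdots$ by subgroups with $1 \in R_{\le 0}$, $R_{\le m} \cdot R_{\le n} \subseteq R_{\le m+n}$, and $R = \bigcup_n R_{\le n}$. Let $\mathcal{R} = \bigoplus_{n \ge 0} R_{\le n} z^n \subseteq R[z]$ be the associated Rees algebra. Then the assignment sending an ideal $I \subseteq R$ to $\mathcal{I} = \bigoplus_{n \ge 0} (I \cap R_{\le n}) z^n$ is a bijection from ideals of $R$ to those graded ideals $\mathcal{I}$ of $\mathcal{R}$ such that $z$ is a non-zero-divisor in $\mathcal{R}/\mathcal{I}$. Moreover, $I$ is a prime ideal if and only if $\mathcal{I}$ is prime, and $I$ is a radical ideal if and only if $\mathcal{I}$ is radical. -/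

import Mathlib

/-- For a filtered commutative ring `R` with Rees algebra
`ℛ = ⊕ₙ R_{≤n} zⁿ ⊆ R[z]`, the assignment `I ↦ ℐ = ⊕ₙ (I ∩ R_{≤n}) zⁿ` is a bijection from
ideals of `R` to graded ideals of `ℛ` such that `z` is a non-zero-divisor in `ℛ/ℐ`;
it preserves and reflects primeness and radicality. -/
theorem stmt5 {R : Type*} [CommRing R]
    (F : ℕ → AddSubgroup R) (hmono : Monotone F) (hone : (1 : R) ∈ F 0)
    (hmulF : ∀ m n : ℕ, ∀ x y : R, x ∈ F m → y ∈ F n → x * y ∈ F (m + n))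
    (hunion : ∀ r : R, ∃ n, r ∈ F n)
    -- the Rees algebra, as a subset of `R[z]`
    (Rees : Set (Polynomial R)) (hRees : Rees = {p | ∀ n, p.coeff n ∈ F n})
    -- the assignment `I ↦ ℐ`
    (Φ : Ideal R → Set (Polynomial R))
    (hΦ : ∀ I, Φ I = {p | (∀ n, p.coeff n ∈ F n) ∧ ∀ n, p.coeff n ∈ I})
    -- "ideal of the Rees algebra"
    (IsReesIdeal : Set (Polynomial R) → Prop)
    (hRI : ∀ J, IsReesIdeal J ↔
      (J ⊆ Rees ∧ (0 : Polynomial R) ∈ J ∧ (∀ p ∈ J, ∀ q ∈ J, p + q ∈ J) ∧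
        ∀ p ∈ Rees, ∀ q ∈ J, p * q ∈ J))
    -- "graded ideal": closed under taking homogeneous components
    (Graded : Set (Polynomial R) → Prop)
    (hGr : ∀ J, Graded J ↔
      ∀ p ∈ J, ∀ n : ℕ, Polynomial.C (p.coeff n) * Polynomial.X ^ n ∈ J)
    -- "`z` is a non-zero-divisor in `ℛ/J`"
    (ZReg : Set (Polynomial R) → Prop)
    (hZ : ∀ J, ZReg J ↔ ∀ p ∈ Rees, Polynomial.X * p ∈ J → p ∈ J) :
    (∀ I : Ideal R, IsReesIdeal (Φ I) ∧ Graded (Φ I) ∧ ZReg (Φ I)) ∧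
    Function.Injective Φ ∧
    (∀ J : Set (Polynomial R), IsReesIdeal J → Graded J → ZReg J → ∃ I : Ideal R, Φ I = J) ∧
    (∀ I : Ideal R, I.IsPrime ↔
      (Φ I ≠ Rees ∧ ∀ p ∈ Rees, ∀ q ∈ Rees, p * q ∈ Φ I → p ∈ Φ I ∨ q ∈ Φ I)) ∧
    (∀ I : Ideal R, I.IsRadical ↔
      ∀ p ∈ Rees, ∀ n : ℕ, 0 < n → p ^ n ∈ Φ I → p ∈ Φ I) := by
  classical
  -- membership rewrites
  have hReesMem : ∀ p : Polynomial R, p ∈ Rees ↔ ∀ n, p.coeff n ∈ F n := by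
    intro p; rw [hRees]; exact Iff.rfl
  have hΦMem : ∀ (I : Ideal R) (p : Polynomial R),
      p ∈ Φ I ↔ ((∀ n, p.coeff n ∈ F n) ∧ ∀ n, p.coeff n ∈ I) := by
    intro I p; rw [hΦ]; exact Iff.rfl
  have honeF : ∀ n, (1 : R) ∈ F n := fun n => hmono (Nat.zero_le n) hone
  -- products of Rees elements are Rees
  have hmulRees : ∀ p q : Polynomial R, (∀ n, p.coeff n ∈ F n) → (∀ n, q.coeff n ∈ F n) →
      ∀ n, (p * q).coeff n ∈ F n := by
    intro p q hp hq n
    rw [Polynomial.coeff_mul]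
    refine AddSubgroup.sum_mem _ ?_
    intro c hc
    have h := hmulF c.1 c.2 _ _ (hp c.1) (hq c.2)
    rwa [Finset.HasAntidiagonal.mem_antidiagonal.mp hc] at h
  -- coefficients of monomials
  have hcoe : ∀ (r : R) (n k : ℕ),
      (Polynomial.C r * Polynomial.X ^ n).coeff k = if k = n then r else 0 := by
    intro r n k
    simp [Polynomial.coeff_C_mul, Polynomial.coeff_X_pow, mul_ite]
  have hmonoRees : ∀ (r : R) (n : ℕ), r ∈ F n →
      ∀ k, (Polynomial.C r * Polynomial.X ^ n).coeff k ∈ F k := by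
    intro r n hr k
    rw [hcoe]
    split
    · next h => exact h ▸ hr
    · exact (F k).zero_mem
  have hmonoΦ : ∀ (I : Ideal R) (r : R) (n : ℕ), r ∈ F n → r ∈ I →
      Polynomial.C r * Polynomial.X ^ n ∈ Φ I := by
    intro I r n hr hrI
    rw [hΦMem]
    refine ⟨hmonoRees r n hr, fun k => ?_⟩
    rw [hcoe]; split
    · exact hrI
    · exact I.zero_mem
  -- quotient map characterization
  have hmapzero : ∀ (I : Ideal R) (p : Polynomial R),
      p.map (Ideal.Quotient.mk I) = 0 ↔ ∀ n, p.coeff n ∈ I := by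
    intro I p
    constructor
    · intro h n
      have := congrArg (fun q => Polynomial.coeff q n) h
      simpa [Polynomial.coeff_map, Ideal.Quotient.eq_zero_iff_mem] using this
    · intro h
      ext n
      simpa [Polynomial.coeff_map, Ideal.Quotient.eq_zero_iff_mem] using h n
  -- Part 1
  have part1 : ∀ I : Ideal R, IsReesIdeal (Φ I) ∧ Graded (Φ I) ∧ ZReg (Φ I) := by
    intro I
    refine ⟨?_, ?_, ?_⟩
    · rw [hRI]
      refine ⟨?_, ?_, ?_, ?_⟩
      · intro p hp; rw [hReesMem]; exact ((hΦMem I p).mp hp).1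
      · rw [hΦMem]
        exact ⟨fun n => by simpa using (F n).zero_mem, fun n => by simpa using I.zero_mem⟩
      · intro p hp q hq
        rw [hΦMem] at hp hq ⊢
        exact ⟨fun n => by simpa using (F n).add_mem (hp.1 n) (hq.1 n),
          fun n => by simpa using I.add_mem (hp.2 n) (hq.2 n)⟩
      · intro p hp q hq
        rw [hReesMem] at hp
        rw [hΦMem] at hq ⊢
        refine ⟨hmulRees p q hp hq.1, fun n => ?_⟩
        rw [Polynomial.coeff_mul]
        exact Ideal.sum_mem _ (fun c _ => I.mul_mem_left _ (hq.2 c.2))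
    · rw [hGr]
      intro p hp n
      rw [hΦMem] at hp
      exact hmonoΦ I _ n (hp.1 n) (hp.2 n)
    · rw [hZ]
      intro p hp hXp
      rw [hReesMem] at hp
      rw [hΦMem] at hXp ⊢
      refine ⟨hp, fun n => ?_⟩
      have := hXp.2 (n + 1)
      rwa [Polynomial.coeff_X_mul] at this
  -- Injectivity
  have hinj : Function.Injective Φ := by
    intro I J h
    ext r
    constructor
    · intro hr
      obtain ⟨n, hn⟩ := hunion r
      have := hmonoΦ I r n hn hr
      rw [h, hΦMem] at this
      have := this.2 n
      rwa [hcoe, if_pos rfl] at this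
    · intro hr
      obtain ⟨n, hn⟩ := hunion r
      have := hmonoΦ J r n hn hr
      rw [← h, hΦMem] at this
      have := this.2 n
      rwa [hcoe, if_pos rfl] at this
  -- Surjectivity
  have hsurj : ∀ J : Set (Polynomial R), IsReesIdeal J → Graded J → ZReg J →
      ∃ I : Ideal R, Φ I = J := by
    intro J hJ hGJ hZJ
    rw [hRI] at hJ
    obtain ⟨hJR, hJ0, hJadd, hJmul⟩ := hJ
    rw [hGr] at hGJ
    rw [hZ] at hZJ
    -- shifting lemma
    have hshift : ∀ (r : R) (n m : ℕ), Polynomial.C r * Polynomial.X ^ n ∈ J →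
        r ∈ F m → Polynomial.C r * Polynomial.X ^ m ∈ J := by
      intro r n m hrn hrm
      rcases le_or_gt n m with hnm | hmn
      · have hX : (Polynomial.X : Polynomial R) ^ (m - n) ∈ Rees := by
          rw [hReesMem]
          intro k
          rw [Polynomial.coeff_X_pow]
          split
          · exact honeF k
          · exact (F k).zero_mem
        have := hJmul _ hX _ hrn
        rwa [mul_left_comm, ← pow_add, Nat.sub_add_cancel hnm] at this
      · -- use ZReg repeatedly
        have key : ∀ k : ℕ, Polynomial.C r * Polynomial.X ^ (m + k) ∈ J →
            Polynomial.C r * Polynomial.X ^ m ∈ J := by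
          intro k
          induction k with
          | zero => simpa using id
          | succ k ih =>
            intro h
            refine ih (hZJ _ ?_ ?_)
            · rw [hReesMem]
              exact hmonoRees r (m + k) (hmono (Nat.le_add_right m k) hrm)
            · have : Polynomial.X * (Polynomial.C r * Polynomial.X ^ (m + k))
                  = Polynomial.C r * Polynomial.X ^ (m + (k + 1)) := by
                rw [mul_left_comm, ← pow_succ']
                ring_nf
              rwa [this]
        have hn' : n = m + (n - m) := by omega
        exact key (n - m) (by rwa [← hn'])
    -- the candidate ideal
    set Icar : Set R := {r | ∃ n, r ∈ F n ∧ Polynomial.C r * Polynomial.X ^ n ∈ J} with hIcar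
    have hI0 : (0 : R) ∈ Icar := ⟨0, (F 0).zero_mem, by simpa using hJ0⟩
    have hIadd : ∀ a b : R, a ∈ Icar → b ∈ Icar → a + b ∈ Icar := by
      rintro a b ⟨n, hna, hJa⟩ ⟨m, hmb, hJb⟩
      refine ⟨max n m, (F _).add_mem (hmono (le_max_left n m) hna)
        (hmono (le_max_right n m) hmb), ?_⟩
      have ha := hshift a n (max n m) hJa (hmono (le_max_left n m) hna)
      have hb := hshift b m (max n m) hJb (hmono (le_max_right n m) hmb)
      have := hJadd _ ha _ hb
      rwa [← add_mul, ← Polynomial.C_add] at this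
    have hIsmul : ∀ a b : R, b ∈ Icar → a * b ∈ Icar := by
      rintro a b ⟨n, hnb, hJb⟩
      obtain ⟨m, hma⟩ := hunion a
      refine ⟨m + n, hmulF m n a b hma hnb, ?_⟩
      have hX : Polynomial.C a * Polynomial.X ^ m ∈ Rees := by
        rw [hReesMem]; exact hmonoRees a m hma
      have := hJmul _ hX _ hJb
      rwa [show (Polynomial.C a * Polynomial.X ^ m) * (Polynomial.C b * Polynomial.X ^ n)
        = Polynomial.C (a * b) * Polynomial.X ^ (m + n) by rw [Polynomial.C_mul, pow_add]; ring]
        at this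
    let I : Ideal R :=
      { carrier := Icar
        zero_mem' := hI0
        add_mem' := fun {a b} ha hb => hIadd a b ha hb
        smul_mem' := fun a b hb => hIsmul a b hb }
    refine ⟨I, ?_⟩
    ext p
    rw [hΦMem]
    constructor
    · rintro ⟨hpF, hpI⟩
      -- p is a finite sum of its monomials, each in J
      have hterm : ∀ k : ℕ, Polynomial.C (p.coeff k) * Polynomial.X ^ k ∈ J := by
        intro k
        obtain ⟨m, hmF, hmJ⟩ := hpI k
        exact hshift _ m k hmJ (hpF k)
      have hsum : ∀ (s : Finset ℕ),
          (∑ i ∈ s, Polynomial.C (p.coeff i) * Polynomial.X ^ i) ∈ J := by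
        intro s
        induction s using Finset.induction with
        | empty => simpa using hJ0
        | insert _ _ hx ih =>
          rw [Finset.sum_insert hx]
          exact hJadd _ (hterm _) _ ih
      have hps : p = ∑ i ∈ Finset.range (p.natDegree + 1),
          Polynomial.C (p.coeff i) * Polynomial.X ^ i := by
        conv_lhs => rw [Polynomial.as_sum_range' p (p.natDegree + 1) (Nat.lt_succ_self _)]
        simp [Polynomial.C_mul_X_pow_eq_monomial]
      rw [hps]
      exact hsum _
    · intro hp
      have hpF : ∀ n, p.coeff n ∈ F n := (hReesMem p).mp (hJR hp)
      refine ⟨hpF, fun n => ⟨n, hpF n, hGJ p hp n⟩⟩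
  refine ⟨part1, hinj, hsurj, ?_, ?_⟩
  -- primeness
  · intro I
    constructor
    · intro hI
      constructor
      · intro h
        have h1 : (1 : Polynomial R) ∈ Rees := by
          rw [hReesMem]
          intro n
          rw [Polynomial.coeff_one]
          split
          · next h => exact h ▸ hone
          · exact (F n).zero_mem
        rw [← h, hΦMem] at h1
        have := h1.2 0
        rw [Polynomial.coeff_one, if_pos rfl] at this
        exact hI.ne_top (Ideal.eq_top_of_isUnit_mem I this isUnit_one)
      · intro p hp q hq hpq
        haveI := hI
        rw [hReesMem] at hp hq
        rw [hΦMem] at hpq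
        have h0 : (p * q).map (Ideal.Quotient.mk I) = 0 := (hmapzero I _).mpr hpq.2
        rw [Polynomial.map_mul, mul_eq_zero] at h0
        rcases h0 with h0 | h0
        · exact Or.inl ((hΦMem I p).mpr ⟨hp, (hmapzero I p).mp h0⟩)
        · exact Or.inr ((hΦMem I q).mpr ⟨hq, (hmapzero I q).mp h0⟩)
    · rintro ⟨hne, hpr⟩
      constructor
      · intro htop
        apply hne
        ext p
        rw [hΦMem, hReesMem]
        exact ⟨fun h => h.1, fun h => ⟨h, fun n => htop ▸ Submodule.mem_top⟩⟩
      · intro r s hrs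
        obtain ⟨n, hn⟩ := hunion r
        obtain ⟨m, hm⟩ := hunion s
        have hrR : Polynomial.C r * Polynomial.X ^ n ∈ Rees := by
          rw [hReesMem]; exact hmonoRees r n hn
        have hsR : Polynomial.C s * Polynomial.X ^ m ∈ Rees := by
          rw [hReesMem]; exact hmonoRees s m hm
        have hprod : (Polynomial.C r * Polynomial.X ^ n) * (Polynomial.C s * Polynomial.X ^ m)
            ∈ Φ I := by
          rw [show (Polynomial.C r * Polynomial.X ^ n) * (Polynomial.C s * Polynomial.X ^ m)
            = Polynomial.C (r * s) * Polynomial.X ^ (n + m) by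
              rw [Polynomial.C_mul, pow_add]; ring]
          exact hmonoΦ I _ _ (hmulF n m r s hn hm) hrs
        rcases hpr _ hrR _ hsR hprod with h | h
        · rw [hΦMem] at h
          have := h.2 n
          rw [hcoe, if_pos rfl] at this
          exact Or.inl this
        · rw [hΦMem] at h
          have := h.2 m
          rw [hcoe, if_pos rfl] at this
          exact Or.inr this
  -- radicality
  · intro I
    constructor
    · intro hrad p hp n hn hpn
      haveI : IsReduced (R ⧸ I) := (Ideal.isRadical_iff_quotient_reduced I).mp hrad
      rw [hReesMem] at hp
      rw [hΦMem] at hpn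
      have h0 : (p.map (Ideal.Quotient.mk I)) ^ n = 0 := by
        rw [← Polynomial.map_pow]
        exact (hmapzero I _).mpr hpn.2
      have hnil : IsNilpotent (p.map (Ideal.Quotient.mk I)) := ⟨n, h0⟩
      rw [Polynomial.isNilpotent_iff] at hnil
      refine (hΦMem I p).mpr ⟨hp, fun k => ?_⟩
      have := IsReduced.eq_zero _ (hnil k)
      rw [Polynomial.coeff_map] at this
      rwa [← Ideal.Quotient.eq_zero_iff_mem]
    · intro h
      intro x hx
      rw [Ideal.mem_radical_iff] at hx
      obtain ⟨n, hxn⟩ := hx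
      rcases Nat.eq_zero_or_pos n with rfl | hn
      · rw [pow_zero] at hxn
        exact (Ideal.eq_top_of_isUnit_mem I hxn isUnit_one) ▸ Submodule.mem_top
      · obtain ⟨m, hm⟩ := hunion x
        have hpR : Polynomial.C x * Polynomial.X ^ m ∈ Rees := by
          rw [hReesMem]; exact hmonoRees x m hm
        have hxnF : ∀ k : ℕ, x ^ k ∈ F (k * m) := by
          intro k
          induction k with
          | zero => simpa using hone
          | succ k ih =>
            rw [pow_succ, Nat.succ_mul]
            exact hmulF _ _ _ _ ih hm
        have hpow : (Polynomial.C x * Polynomial.X ^ m) ^ n ∈ Φ I := by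
          rw [mul_pow, ← Polynomial.C_pow, ← pow_mul]
          exact hmonoΦ I _ _ (by have := hxnF n; rwa [Nat.mul_comm] at this) hxn
        have := h _ hpR n hn hpow
        rw [hΦMem] at this
        have := this.2 m
        rwa [hcoe, if_pos rfl] at this
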